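/- Let φ be a spectrum, μ the associated measure on [0,1], and X an integrable nonnegative random variable. Then g_{φ,X} is a real-valued increasing convex function and the infimum in the representation ρ_φ(X) = inf_{g∈G}{E[g(X)] + ∫_0^1 g^*(φ(u))du} is attained at g_{φ,X}, i.e. ρ_φ(X) = E[g_{φ,X}(X)] + ∫_0^1 g_{φ,X}^*(φ(u))du. -/

import Mathlib

open MeasureTheory Set NNReal ENNReal

/-- Quantile function `F_X⁻¹(u) = inf {x | u ≤ F_X(x)}`. -/
noncomputable def quantile {Ω : Type*} [MeasurableSpace Ω] (P : Measure Ω)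
    (X : Ω → ℝ) (u : ℝ) : ℝ :=
  sInf {x : ℝ | u ≤ (P {ω | X ω ≤ x}).toReal}

/-- Spectral risk measure `ρ_φ(X) = ∫_0^1 F_X⁻¹(u) φ(u) du ∈ [0,∞]`. -/
noncomputable def specRisk {Ω : Type*} [MeasurableSpace Ω] (P : Measure Ω)
    (φ : ℝ → ℝ) (X : Ω → ℝ) : ℝ≥0∞ :=
  ∫⁻ u in Set.Ioo (0:ℝ) 1, ENNReal.ofReal (quantile P X u * φ u)

/-- `φ` is a spectrum. -/
def IsSpectrum (φ : ℝ → ℝ) : Prop :=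
  MonotoneOn φ (Set.Icc 0 1) ∧ (∀ u ∈ Set.Icc (0:ℝ) 1, 0 ≤ φ u) ∧
    (∀ t ∈ Set.Ico (0:ℝ) 1, ContinuousWithinAt φ (Set.Ici t) t) ∧
    (∫ u in Set.Ioo (0:ℝ) 1, φ u) = 1

/-- Convex conjugate `g^*(y) = sup_{s ∈ ℝ} (s y - g s)`, with values in `(-∞,∞]`. -/
noncomputable def conj (g : ℝ → ℝ) (y : ℝ) : EReal :=
  ⨆ s : ℝ, ((s * y - g s : ℝ) : EReal)

/-- The nonnegative part of an extended real number, as an element of `[0,∞]`. -/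
noncomputable def erealToENNReal (x : EReal) : ℝ≥0∞ :=
  if x = ⊤ then ⊤ else ENNReal.ofReal x.toReal

/-- Expectation `E[g(X)] ∈ (-∞,∞]` of `g(X)` when `g(X) ≥ b` pointwise. -/
noncomputable def expFrom {Ω : Type*} [MeasurableSpace Ω] (P : Measure Ω)
    (g : ℝ → ℝ) (X : Ω → ℝ) (b : ℝ) : EReal :=
  ((∫⁻ ω, ENNReal.ofReal (g (X ω) - b) ∂P : ℝ≥0∞) : EReal) + (b : EReal)

/-- `∫_0^1 g^*(φ(u)) du ∈ (-∞,∞]` written via the shift `g^*(φ(u)) + b ≥ 0`. -/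
noncomputable def intConj (φ : ℝ → ℝ) (g : ℝ → ℝ) (b : ℝ) : EReal :=
  ((∫⁻ u in Set.Ioo (0:ℝ) 1, erealToENNReal (conj g (φ u) + (b : EReal)) : ℝ≥0∞) : EReal)
    - (b : EReal)

/-- The integrand of `g_{φ,X}`:
`α ↦ F_X⁻¹(α) + (1-α)⁻¹ (x - F_X⁻¹(α))⁺`. -/
noncomputable def gphiIntegrand {Ω : Type*} [MeasurableSpace Ω] (P : Measure Ω)
    (X : Ω → ℝ) (x α : ℝ) : ℝ :=
  quantile P X α + (1 - α)⁻¹ * max (x - quantile P X α) 0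

/-- `g_{φ,X}(x) = ∫_{[0,1]} [F_X⁻¹(α) + (1-α)⁻¹ (x - F_X⁻¹(α))⁺] μ(dα)`. -/
noncomputable def gphi {Ω : Type*} [MeasurableSpace Ω] (P : Measure Ω)
    (μ : Measure ℝ) (X : Ω → ℝ) (x : ℝ) : ℝ :=
  ∫ α, gphiIntegrand P X x α ∂μ

lemma mem_cdfSet_nonneg {Ω : Type*} [MeasurableSpace Ω] {P : Measure Ω} {X : Ω → ℝ}
    (hX : ∀ ω, 0 ≤ X ω) {u x : ℝ} (hu : 0 < u)
    (hx : u ≤ (P {ω | X ω ≤ x}).toReal) : 0 ≤ x := by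
  by_contra h
  push_neg at h
  have he : {ω | X ω ≤ x} = ∅ :=
    eq_empty_of_forall_notMem fun ω hω => absurd (hX ω) (not_le.2 (lt_of_le_of_lt hω h))
  rw [he] at hx
  simp at hx
  exact absurd (hu.trans_le hx) (lt_irrefl _)

lemma quantile_nonneg {Ω : Type*} [MeasurableSpace Ω] (P : Measure Ω) {X : Ω → ℝ}
    (hX : ∀ ω, 0 ≤ X ω) (u : ℝ) : 0 ≤ quantile P X u := by
  unfold quantile
  rcases le_or_gt u 0 with hu | hu
  · have h : {x : ℝ | u ≤ (P {ω | X ω ≤ x}).toReal} = univ :=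
      eq_univ_of_forall fun x => hu.trans ENNReal.toReal_nonneg
    rw [h, Real.sInf_of_not_bddBelow not_bddBelow_univ]
  · rcases eq_empty_or_nonempty {x : ℝ | u ≤ (P {ω | X ω ≤ x}).toReal} with h | h
    · rw [h, Real.sInf_empty]
    · exact le_csInf h fun x hx => mem_cdfSet_nonneg hX hu hx

lemma cdfSet_nonempty {Ω : Type*} [MeasurableSpace Ω] (P : Measure Ω)
    [IsProbabilityMeasure P] (X : Ω → ℝ) {u : ℝ} (hu : u < 1) :
    ∃ x : ℝ, u ≤ (P {ω | X ω ≤ x}).toReal := by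
  have hU : ⋃ n : ℕ, {ω | X ω ≤ (n : ℝ)} = univ := by
    apply eq_univ_of_forall
    intro ω
    obtain ⟨n, hn⟩ := exists_nat_ge (X ω)
    exact mem_iUnion.2 ⟨n, hn⟩
  have hmono : Monotone fun n : ℕ => {ω | X ω ≤ (n : ℝ)} := by
    intro m n hmn ω (hω : X ω ≤ m)
    exact hω.trans (by exact_mod_cast hmn)
  have ht : Filter.Tendsto (fun n : ℕ => P {ω | X ω ≤ (n : ℝ)}) Filter.atTop
      (nhds (P univ)) := by
    rw [← hU]
    exact tendsto_measure_iUnion_atTop hmono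
  rw [measure_univ] at ht
  have hlt : ENNReal.ofReal u < 1 := by
    rcases le_or_gt u 0 with h | h
    · exact lt_of_le_of_lt (by simp [ENNReal.ofReal_of_nonpos h]) one_pos
    · rwa [← ENNReal.ofReal_one, ENNReal.ofReal_lt_ofReal_iff one_pos]
  obtain ⟨n, hn⟩ := (ht.eventually (eventually_gt_nhds hlt)).exists
  refine ⟨n, ?_⟩
  have h1 : ENNReal.ofReal u ≤ P {ω | X ω ≤ (n : ℝ)} := hn.le
  have hne : P {ω | X ω ≤ (n : ℝ)} ≠ ⊤ := measure_ne_top _ _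
  rcases le_or_gt u 0 with h | h
  · exact h.trans ENNReal.toReal_nonneg
  · exact (ENNReal.ofReal_le_iff_le_toReal hne).1 h1

lemma cdfSet_bddBelow {Ω : Type*} [MeasurableSpace Ω] {P : Measure Ω} {X : Ω → ℝ}
    (hX : ∀ ω, 0 ≤ X ω) {u : ℝ} (hu : 0 < u) :
    BddBelow {x : ℝ | u ≤ (P {ω | X ω ≤ x}).toReal} :=
  ⟨0, fun x hx => mem_cdfSet_nonneg hX hu hx⟩

lemma cdf_mono {Ω : Type*} [MeasurableSpace Ω] (P : Measure Ω) [IsProbabilityMeasure P]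
    (X : Ω → ℝ) {x y : ℝ} (hxy : x ≤ y) :
    (P {ω | X ω ≤ x}).toReal ≤ (P {ω | X ω ≤ y}).toReal :=
  ENNReal.toReal_mono (measure_ne_top _ _)
    (measure_mono fun ω (hω : X ω ≤ x) => hω.trans hxy)

lemma quantile_le_iff {Ω : Type*} [MeasurableSpace Ω] (P : Measure Ω)
    [IsProbabilityMeasure P] (X : Ω → ℝ) (hXm : Measurable X) (hX : ∀ ω, 0 ≤ X ω) {u : ℝ}
    (hu : u ∈ Ioo (0:ℝ) 1) (a : ℝ) :
    quantile P X u ≤ a ↔ u ≤ (P {ω | X ω ≤ a}).toReal := by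
  constructor
  · intro h
    -- right continuity
    have key : ∀ n : ℕ, u ≤ (P {ω | X ω ≤ a + 1 / (n + 1)}).toReal := by
      intro n
      have hpos : (0:ℝ) < 1 / (n + 1) := by positivity
      have hlt : quantile P X u < a + 1 / (n + 1) := lt_of_le_of_lt h (by linarith)
      obtain ⟨y, hy, hylt⟩ := (csInf_lt_iff (cdfSet_bddBelow hX hu.1)
        (cdfSet_nonempty P X hu.2)).1 hlt
      exact le_trans hy (cdf_mono P X hylt.le)
    have hInter : ⋂ n : ℕ, {ω | X ω ≤ a + 1 / (n + 1)} = {ω | X ω ≤ a} := by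
      ext ω
      simp only [mem_iInter, mem_setOf_eq]
      constructor
      · intro hω
        by_contra hc
        push_neg at hc
        obtain ⟨n, hn⟩ := exists_nat_one_div_lt (sub_pos.2 hc)
        exact absurd (hω n) (by push_cast; push_cast at hn; nlinarith)
      · intro hω n
        have : (0:ℝ) < 1 / (n + 1) := by positivity
        linarith
    have ht : Filter.Tendsto (fun n : ℕ => P {ω | X ω ≤ a + 1 / (n + 1)}) Filter.atTop
        (nhds (P {ω | X ω ≤ a})) := by
      rw [← hInter]
      apply tendsto_measure_iInter_atTop
      · intro n
        exact (hXm measurableSet_Iic).nullMeasurableSet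
      · intro m n hmn ω (hω : X ω ≤ a + 1 / (n + 1))
        refine hω.trans (by
          have h1 : (m:ℝ) ≤ n := by exact_mod_cast hmn
          have : (1:ℝ) / (n + 1) ≤ 1 / (m + 1) := by
            apply one_div_le_one_div_of_le <;> linarith
          linarith)
      · exact ⟨0, measure_ne_top _ _⟩
    have ht2 := (ENNReal.tendsto_toReal (measure_ne_top P _)).comp ht
    exact le_of_tendsto_of_tendsto tendsto_const_nhds ht2
      (Filter.Eventually.of_forall key)
  · intro h
    exact csInf_le (cdfSet_bddBelow hX hu.1) h

lemma quantile_zero {Ω : Type*} [MeasurableSpace Ω] (P : Measure Ω) (X : Ω → ℝ) :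
    quantile P X 0 = 0 := by
  unfold quantile
  have h : {x : ℝ | (0:ℝ) ≤ (P {ω | X ω ≤ x}).toReal} = univ :=
    eq_univ_of_forall fun x => ENNReal.toReal_nonneg
  rw [h, Real.sInf_of_not_bddBelow not_bddBelow_univ]

lemma quantile_monotoneOn {Ω : Type*} [MeasurableSpace Ω] (P : Measure Ω)
    [IsProbabilityMeasure P] (X : Ω → ℝ) (hX : ∀ ω, 0 ≤ X ω) :
    MonotoneOn (quantile P X) (Ico (0:ℝ) 1) := by
  intro α hα β hβ hab
  rcases eq_or_lt_of_le hα.1 with h0 | h0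
  · rw [← h0, quantile_zero]
    exact quantile_nonneg P hX β
  · exact csInf_le_csInf (cdfSet_bddBelow hX h0)
      (cdfSet_nonempty P X hβ.2)
      (fun x hx => le_trans hab hx)

lemma quantile_aemeasurable_Ioo {Ω : Type*} [MeasurableSpace Ω] (P : Measure Ω)
    [IsProbabilityMeasure P] (X : Ω → ℝ) (hX : ∀ ω, 0 ≤ X ω) :
    AEMeasurable (quantile P X) (volume.restrict (Ioo (0:ℝ) 1)) :=
  aemeasurable_restrict_of_monotoneOn measurableSet_Ioo
    ((quantile_monotoneOn P X hX).mono (fun x hx => ⟨hx.1.le, hx.2⟩))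

lemma cdf_le_one {Ω : Type*} [MeasurableSpace Ω] (P : Measure Ω)
    [IsProbabilityMeasure P] (X : Ω → ℝ) (a : ℝ) :
    (P {ω | X ω ≤ a}).toReal ≤ 1 := by
  have := prob_le_one (μ := P) (s := {ω | X ω ≤ a})
  calc (P {ω | X ω ≤ a}).toReal ≤ (1 : ℝ≥0∞).toReal :=
        ENNReal.toReal_mono (by simp) this
    _ = 1 := by simp

lemma map_quantile {Ω : Type*} [MeasurableSpace Ω] (P : Measure Ω)
    [IsProbabilityMeasure P] (X : Ω → ℝ) (hXm : Measurable X) (hX : ∀ ω, 0 ≤ X ω) :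
    Measure.map (quantile P X) (volume.restrict (Ioo (0:ℝ) 1)) = Measure.map X P := by
  have hq := quantile_aemeasurable_Ioo P X hX
  haveI : IsFiniteMeasure (Measure.map (quantile P X) (volume.restrict (Ioo (0:ℝ) 1))) := by
    constructor
    rw [Measure.map_apply_of_aemeasurable hq MeasurableSet.univ]
    simp [Real.volume_Ioo]
  apply Measure.ext_of_Iic
  intro a
  rw [Measure.map_apply_of_aemeasurable hq measurableSet_Iic,
    Measure.map_apply hXm measurableSet_Iic,
    Measure.restrict_apply' measurableSet_Ioo]
  have hset : quantile P X ⁻¹' Iic a ∩ Ioo (0:ℝ) 1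
      = Iic ((P {ω | X ω ≤ a}).toReal) ∩ Ioo (0:ℝ) 1 := by
    ext u
    simp only [mem_inter_iff, mem_preimage, mem_Iic, and_congr_left_iff]
    intro hu
    exact quantile_le_iff P X hXm hX hu a
  rw [hset]
  have hc1 : (P {ω | X ω ≤ a}).toReal ≤ 1 := cdf_le_one P X a
  have hc0 : 0 ≤ (P {ω | X ω ≤ a}).toReal := ENNReal.toReal_nonneg
  have hvol : volume (Iic ((P {ω | X ω ≤ a}).toReal) ∩ Ioo (0:ℝ) 1)
      = ENNReal.ofReal ((P {ω | X ω ≤ a}).toReal) := by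
    rcases lt_or_eq_of_le hc1 with h | h
    · have : Iic ((P {ω | X ω ≤ a}).toReal) ∩ Ioo (0:ℝ) 1
          = Ioc (0:ℝ) ((P {ω | X ω ≤ a}).toReal) := by
        ext u
        simp only [mem_inter_iff, mem_Iic, mem_Ioo, mem_Ioc]
        constructor
        · rintro ⟨h1, h2, h3⟩; exact ⟨h2, h1⟩
        · rintro ⟨h1, h2⟩; exact ⟨h2, h1, lt_of_le_of_lt h2 h⟩
      rw [this, Real.volume_Ioc, sub_zero]
    · have : Iic ((P {ω | X ω ≤ a}).toReal) ∩ Ioo (0:ℝ) 1 = Ioo (0:ℝ) 1 := by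
        apply inter_eq_self_of_subset_right
        intro u hu
        rw [← h] at hu
        exact hu.2.le
      rw [this, Real.volume_Ioo, ← h]
      norm_num
  rw [hvol, ENNReal.ofReal_toReal (measure_ne_top _ _)]
  rfl

lemma ereal_assemble (A B : ℝ≥0∞) (b : ℝ) :
    ((A + B : ℝ≥0∞) : EReal) = ((A : EReal) + (b : EReal)) + ((B : EReal) - (b : EReal)) := by
  induction A using ENNReal.recTopCoe with
  | top =>
    rw [top_add, EReal.coe_ennreal_top, EReal.top_add_of_ne_bot (EReal.coe_ne_bot b)]
    induction B using ENNReal.recTopCoe with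
    | top =>
      rw [EReal.coe_ennreal_top, EReal.top_sub_coe, EReal.top_add_of_ne_bot]
      simp
    | coe c =>
      rw [EReal.coe_nnreal_eq_coe_real, ← EReal.coe_sub, EReal.top_add_of_ne_bot (EReal.coe_ne_bot _)]
  | coe a =>
    induction B using ENNReal.recTopCoe with
    | top =>
      rw [add_top, EReal.coe_ennreal_top, EReal.top_sub_coe, EReal.coe_nnreal_eq_coe_real,
        ← EReal.coe_add, EReal.add_top_of_ne_bot (EReal.coe_ne_bot _)]
    | coe c =>
      have h1 : ((((a : ℝ≥0∞) + (c : ℝ≥0∞) : ℝ≥0∞)) : EReal) = (((a : ℝ) + (c : ℝ) : ℝ) : EReal) := by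
        rw [← ENNReal.coe_add, EReal.coe_nnreal_eq_coe_real]
        push_cast
        rfl
      rw [h1, EReal.coe_nnreal_eq_coe_real, EReal.coe_nnreal_eq_coe_real, ← EReal.coe_add,
        ← EReal.coe_sub, ← EReal.coe_add, EReal.coe_eq_coe_iff]
      ring


/-- For a spectrum `φ` with associated measure `μ` and an integrable
nonnegative random variable `X`, `g_{φ,X}` is a real-valued increasing convex function
and the infimum in the spectral representation is attained at it:
`ρ_φ(X) = E[g_{φ,X}(X)] + ∫_0^1 g_{φ,X}^*(φ(u)) du`. -/
theorem spectral_inf_attained {Ω : Type*} [MeasurableSpace Ω] (P : Measure Ω)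
    [IsProbabilityMeasure P] (φ : ℝ → ℝ) (hφ : IsSpectrum φ)
    (ν : Measure ℝ) (hν : ∀ t ∈ Set.Icc (0:ℝ) 1, ν (Set.Icc 0 t) = ENNReal.ofReal (φ t))
    (hνsupp : ν (Set.Icc (0:ℝ) 1)ᶜ = 0)
    (μ : Measure ℝ) (hμ : μ = ν.withDensity (fun α => ENNReal.ofReal (1 - α)))
    (X : Ω → ℝ) (hXm : Measurable X) (hX : ∀ ω, 0 ≤ X ω) (hXi : Integrable X P) :
    (∀ x : ℝ, Integrable (gphiIntegrand P X x) μ) ∧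
      Monotone (gphi P μ X) ∧ ConvexOn ℝ Set.univ (gphi P μ X) ∧
      ((specRisk P φ X : ℝ≥0∞) : EReal)
        = expFrom P (gphi P μ X) X (gphi P μ X 0)
            + intConj φ (gphi P μ X) (gphi P μ X 0) := by
  obtain ⟨hφmono, hφnn, hφrc, hφint⟩ := hφ
  have hν1 : ν (Icc (0:ℝ) 1) = ENNReal.ofReal (φ 1) := hν 1 ⟨zero_le_one, le_refl 1⟩
  haveI hνfin : IsFiniteMeasure ν := by
    constructor
    have h : ν univ ≤ ν (Icc (0:ℝ) 1) + ν (Icc (0:ℝ) 1)ᶜ := by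
      conv_lhs => rw [← union_compl_self (Icc (0:ℝ) 1)]
      exact measure_union_le _ _
    rw [hνsupp, hν1, add_zero] at h
    exact lt_of_le_of_lt h ENNReal.ofReal_lt_top
  have hνae : ∀ᵐ α ∂ν, α ∈ Icc (0:ℝ) 1 := by
    rw [ae_iff]
    have h : {α : ℝ | ¬ α ∈ Icc (0:ℝ) 1} = (Icc (0:ℝ) 1)ᶜ := rfl
    rw [h]; exact hνsupp
  have hμIio : μ (Iio (0:ℝ)) = 0 := by
    rw [hμ, withDensity_apply _ measurableSet_Iio]
    have h0 : ν (Iio (0:ℝ)) = 0 := by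
      apply measure_mono_null _ hνsupp
      intro α hα h
      simp only [mem_Icc] at h
      simp only [mem_Iio] at hα
      linarith [h.1]
    exact setLIntegral_measure_zero _ _ h0
  have hμIci : μ (Ici (1:ℝ)) = 0 := by
    rw [hμ, withDensity_apply _ measurableSet_Ici]
    have h : ∀ᵐ α ∂(ν.restrict (Ici (1:ℝ))), ENNReal.ofReal (1 - α) = 0 := by
      filter_upwards [ae_restrict_mem measurableSet_Ici] with α hα
      rw [ENNReal.ofReal_eq_zero]
      have := mem_Ici.1 hα
      linarith
    rw [lintegral_congr_ae h, lintegral_zero]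
  have hμIco : μ (Ico (0:ℝ) 1)ᶜ = 0 := by
    have h : (Ico (0:ℝ) 1)ᶜ = Iio 0 ∪ Ici 1 := by
      ext α
      simp only [mem_compl_iff, mem_Ico, not_and_or, not_le, not_lt, mem_union, mem_Iio, mem_Ici]
    rw [h]
    exact measure_union_null hμIio hμIci
  have hμae : ∀ᵐ α ∂μ, α ∈ Ico (0:ℝ) 1 := by
    rw [ae_iff]
    have h : {α : ℝ | ¬ α ∈ Ico (0:ℝ) 1} = (Ico (0:ℝ) 1)ᶜ := rfl
    rw [h]; exact hμIco
  haveI hμfin : IsFiniteMeasure μ := by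
    constructor
    rw [hμ, withDensity_apply _ MeasurableSet.univ, Measure.restrict_univ]
    calc ∫⁻ α, ENNReal.ofReal (1 - α) ∂ν ≤ ∫⁻ _, 1 ∂ν := by
          apply lintegral_mono_ae
          filter_upwards [hνae] with α hα
          rw [← ENNReal.ofReal_one]
          exact ENNReal.ofReal_le_ofReal (by linarith [hα.1])
      _ = ν univ := by simp
      _ < ⊤ := measure_lt_top ν univ
  have hq0 : ∀ u, 0 ≤ quantile P X u := quantile_nonneg P hX
  have hmono : MonotoneOn (quantile P X) (Ico (0:ℝ) 1) := quantile_monotoneOn P X hX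
  have hrestr : μ.restrict (Ico (0:ℝ) 1) = μ := Measure.restrict_eq_self_of_ae_mem hμae
  have hqaeμ : AEMeasurable (quantile P X) μ := by
    rw [← hrestr]
    exact aemeasurable_restrict_of_monotoneOn measurableSet_Ico hmono
  set EX : ℝ := ∫ ω, X ω ∂P with hEXdef
  have hEX : ∫⁻ u in Ioo (0:ℝ) 1, ENNReal.ofReal (quantile P X u) = ENNReal.ofReal EX := by
    calc ∫⁻ u in Ioo (0:ℝ) 1, ENNReal.ofReal (quantile P X u)
        = ∫⁻ x, ENNReal.ofReal x ∂(Measure.map (quantile P X) (volume.restrict (Ioo (0:ℝ) 1))) :=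
          (lintegral_map' ENNReal.measurable_ofReal.aemeasurable
            (quantile_aemeasurable_Ioo P X hX)).symm
      _ = ∫⁻ x, ENNReal.ofReal x ∂(Measure.map X P) := by rw [map_quantile P X hXm hX]
      _ = ∫⁻ ω, ENNReal.ofReal (X ω) ∂P :=
          lintegral_map' ENNReal.measurable_ofReal.aemeasurable hXm.aemeasurable
      _ = ENNReal.ofReal EX :=
          (ofReal_integral_eq_lintegral_ofReal hXi (Filter.Eventually.of_forall hX)).symm
  have hbd : ∀ α ∈ Ico (0:ℝ) 1,
      ENNReal.ofReal (1 - α) * ENNReal.ofReal (quantile P X α) ≤ ENNReal.ofReal EX := by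
    intro α hα
    calc ENNReal.ofReal (1 - α) * ENNReal.ofReal (quantile P X α)
        = ENNReal.ofReal (quantile P X α) * volume (Ioo α 1) := by
          rw [Real.volume_Ioo]; ring
      _ = ∫⁻ _ in Ioo α 1, ENNReal.ofReal (quantile P X α) := by
          rw [setLIntegral_const]
      _ ≤ ∫⁻ u in Ioo α 1, ENNReal.ofReal (quantile P X u) := by
          apply lintegral_mono_ae
          filter_upwards [ae_restrict_mem measurableSet_Ioo] with u hu
          exact ENNReal.ofReal_le_ofReal
            (hmono hα ⟨le_trans hα.1 hu.1.le, hu.2⟩ hu.1.le)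
      _ ≤ ∫⁻ u in Ioo (0:ℝ) 1, ENNReal.ofReal (quantile P X u) :=
          lintegral_mono' (Measure.restrict_mono (Ioo_subset_Ioo hα.1 le_rfl) le_rfl) le_rfl
      _ = ENNReal.ofReal EX := hEX
  have hlq : ∫⁻ α, ENNReal.ofReal (quantile P X α) ∂μ < ⊤ := by
    have hg' : AEMeasurable (fun α => ENNReal.ofReal (quantile P X α)) μ :=
      ENNReal.measurable_ofReal.comp_aemeasurable hqaeμ
    rw [hμ] at hg' ⊢
    rw [lintegral_withDensity_eq_lintegral_mul₀'
      (show Measurable fun α : ℝ => ENNReal.ofReal (1 - α) by fun_prop).aemeasurable hg']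
    calc ∫⁻ α, (fun α => ENNReal.ofReal (1 - α)) α * ENNReal.ofReal (quantile P X α) ∂ν
        ≤ ∫⁻ _, ENNReal.ofReal EX ∂ν := by
          apply lintegral_mono_ae
          filter_upwards [hνae] with α hα
          rcases lt_or_eq_of_le hα.2 with h1 | h1
          · exact hbd α ⟨hα.1, h1⟩
          · simp [← h1]
      _ = ENNReal.ofReal EX * ν univ := by rw [lintegral_const]
      _ < ⊤ := ENNReal.mul_lt_top ENNReal.ofReal_lt_top (measure_lt_top ν univ)
  have hIq : Integrable (quantile P X) μ := by
    refine ⟨hqaeμ.aestronglyMeasurable, ?_⟩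
    rw [hasFiniteIntegral_iff_norm]
    have h : ∀ᵐ α ∂μ, ENNReal.ofReal ‖quantile P X α‖ = ENNReal.ofReal (quantile P X α) :=
      Filter.Eventually.of_forall fun α => by rw [Real.norm_of_nonneg (hq0 α)]
    rw [lintegral_congr_ae h]
    exact hlq
  have hIinv : Integrable (fun α => (1 - α)⁻¹) μ := by
    refine ⟨((measurable_const.sub measurable_id').inv : Measurable fun α : ℝ => (1-α)⁻¹).aestronglyMeasurable, ?_⟩
    rw [hasFiniteIntegral_iff_norm]
    have h : ∀ᵐ α ∂μ, ENNReal.ofReal ‖(1 - α)⁻¹‖ = ENNReal.ofReal ((1 - α)⁻¹) := by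
      filter_upwards [hμae] with α hα
      rw [Real.norm_of_nonneg (inv_nonneg.2 (by linarith [hα.2]))]
    rw [lintegral_congr_ae h, hμ, lintegral_withDensity_eq_lintegral_mul _
      (show Measurable fun α : ℝ => ENNReal.ofReal (1 - α) by fun_prop)
      (show Measurable fun α : ℝ => ENNReal.ofReal ((1 - α)⁻¹) by fun_prop)]
    calc ∫⁻ α, (fun α => ENNReal.ofReal (1 - α)) α * ENNReal.ofReal ((1 - α)⁻¹) ∂ν
        ≤ ∫⁻ _, 1 ∂ν := by
          apply lintegral_mono_ae
          filter_upwards [hνae] with α hα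
          rcases lt_or_eq_of_le hα.2 with h1 | h1
          · rw [← ENNReal.ofReal_mul (by linarith),
              mul_inv_cancel₀ (by linarith : (1:ℝ) - α ≠ 0), ENNReal.ofReal_one]
          · simp [← h1]
      _ = ν univ := by simp
      _ < ⊤ := measure_lt_top ν univ
  have hInt : ∀ x : ℝ, Integrable (gphiIntegrand P X x) μ := by
    intro x
    have h2m : AEMeasurable (fun α => (1 - α)⁻¹ * max (x - quantile P X α) 0) μ :=
      ((measurable_const.sub measurable_id').inv.aemeasurable : AEMeasurable (fun α : ℝ => (1-α)⁻¹) μ).mul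
        ((aemeasurable_const.sub hqaeμ).max aemeasurable_const)
    have h2 : Integrable (fun α => (1 - α)⁻¹ * max (x - quantile P X α) 0) μ := by
      apply Integrable.mono' (hIinv.mul_const (max x 0)) h2m.aestronglyMeasurable
      filter_upwards [hμae] with α hα
      have hk : (0:ℝ) ≤ (1 - α)⁻¹ := inv_nonneg.2 (by linarith [hα.2])
      rw [Real.norm_of_nonneg (mul_nonneg hk (le_max_right _ _))]
      exact mul_le_mul_of_nonneg_left (max_le_max (by linarith [hq0 α]) le_rfl) hk
    exact hIq.add h2
  set g := gphi P μ X with hgdef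
  have hgsub : ∀ s t : ℝ, g s - g t = ∫ α, (gphiIntegrand P X s α - gphiIntegrand P X t α) ∂μ := by
    intro s t
    rw [integral_sub (hInt s) (hInt t)]
    rfl
  have hgmono : Monotone g := by
    intro x y hxy
    apply integral_mono_ae (hInt x) (hInt y)
    filter_upwards [hμae] with α hα
    unfold gphiIntegrand
    have hk : (0:ℝ) ≤ (1 - α)⁻¹ := inv_nonneg.2 (by linarith [hα.2])
    exact add_le_add le_rfl
      (mul_le_mul_of_nonneg_left (max_le_max (by linarith) le_rfl) hk)
  have hgconv : ConvexOn ℝ univ g := by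
    refine ⟨convex_univ, ?_⟩
    intro x _ y _ a b ha hb hab
    have hle : g (a • x + b • y) ≤ ∫ α, (a * gphiIntegrand P X x α + b * gphiIntegrand P X y α) ∂μ := by
      apply integral_mono_ae (hInt _) (((hInt x).const_mul a).add ((hInt y).const_mul b))
      filter_upwards [hμae] with α hα
      simp only [Pi.add_apply]
      unfold gphiIntegrand
      have hk : (0:ℝ) ≤ (1 - α)⁻¹ := inv_nonneg.2 (by linarith [hα.2])
      set c := quantile P X α with hcdef
      have h2 : a * c + b * c = c := by rw [← add_mul, hab, one_mul]
      have h1 : a • x + b • y - c = a * (x - c) + b * (y - c) := by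
        simp only [smul_eq_mul]; linarith
      have hmax : max (a • x + b • y - c) 0 ≤ a * max (x - c) 0 + b * max (y - c) 0 := by
        apply max_le
        · rw [h1]
          exact add_le_add (mul_le_mul_of_nonneg_left (le_max_left _ _) ha)
            (mul_le_mul_of_nonneg_left (le_max_left _ _) hb)
        · positivity
      have h3 := mul_le_mul_of_nonneg_left hmax hk
      nlinarith [h3, h2]
    calc g (a • x + b • y) ≤ _ := hle
      _ = a • g x + b • g y := by
        rw [integral_add ((hInt x).const_mul a) ((hInt y).const_mul b),
          integral_const_mul, integral_const_mul]
        simp only [smul_eq_mul]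
        rfl
  -- θ facts
  have hθ : ∀ u ∈ Ioo (0:ℝ) 1,
      Integrable (fun α => (1-α)⁻¹ * (Icc (0:ℝ) u).indicator (fun _ => (1:ℝ)) α) μ ∧
      ∫ α, (1-α)⁻¹ * (Icc (0:ℝ) u).indicator (fun _ => (1:ℝ)) α ∂μ = φ u := by
    intro u hu
    have hθm : Measurable (fun α => (1-α)⁻¹ * (Icc (0:ℝ) u).indicator (fun _ => (1:ℝ)) α) :=
      ((measurable_const.sub measurable_id').inv).mul (measurable_const.indicator measurableSet_Icc)
    have hθnn : ∀ᵐ α ∂μ, 0 ≤ (1-α)⁻¹ * (Icc (0:ℝ) u).indicator (fun _ => (1:ℝ)) α := by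
      filter_upwards [hμae] with α hα
      exact mul_nonneg (inv_nonneg.2 (by linarith [hα.2]))
        (indicator_nonneg (fun _ _ => zero_le_one) α)
    have hL : ∫⁻ α, ENNReal.ofReal ((1-α)⁻¹ * (Icc (0:ℝ) u).indicator (fun _ => (1:ℝ)) α) ∂μ
        = ENNReal.ofReal (φ u) := by
      rw [hμ, lintegral_withDensity_eq_lintegral_mul _
        (show Measurable fun α : ℝ => ENNReal.ofReal (1 - α) by fun_prop)
        (hθm.ennreal_ofReal)]
      have hcongr : ∀ᵐ α ∂ν,
          ((fun α => ENNReal.ofReal (1-α)) *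
            fun α => ENNReal.ofReal ((1-α)⁻¹ * (Icc (0:ℝ) u).indicator (fun _ => (1:ℝ)) α)) α
          = (Icc (0:ℝ) u).indicator (1 : ℝ → ℝ≥0∞) α := by
        filter_upwards [hνae] with α hα
        simp only [Pi.mul_apply]
        by_cases hmem : α ∈ Icc (0:ℝ) u
        · have hα1 : α < 1 := lt_of_le_of_lt hmem.2 hu.2
          rw [indicator_of_mem hmem, indicator_of_mem hmem, Pi.one_apply, mul_one,
            ← ENNReal.ofReal_mul (by linarith),
            mul_inv_cancel₀ (by linarith : (1:ℝ) - α ≠ 0), ENNReal.ofReal_one]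
        · rw [indicator_of_notMem hmem, indicator_of_notMem hmem, mul_zero,
            ENNReal.ofReal_zero, mul_zero]
      rw [lintegral_congr_ae hcongr, lintegral_indicator_one measurableSet_Icc]
      exact hν u ⟨hu.1.le, hu.2.le⟩
      
    have hθI : Integrable (fun α => (1-α)⁻¹ * (Icc (0:ℝ) u).indicator (fun _ => (1:ℝ)) α) μ := by
      refine ⟨hθm.aestronglyMeasurable, ?_⟩
      rw [hasFiniteIntegral_iff_norm]
      have h : ∀ᵐ α ∂μ, ENNReal.ofReal ‖(1-α)⁻¹ * (Icc (0:ℝ) u).indicator (fun _ => (1:ℝ)) α‖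
          = ENNReal.ofReal ((1-α)⁻¹ * (Icc (0:ℝ) u).indicator (fun _ => (1:ℝ)) α) := by
        filter_upwards [hθnn] with α hα
        rw [Real.norm_of_nonneg hα]
      rw [lintegral_congr_ae h, hL]
      exact ENNReal.ofReal_lt_top
    refine ⟨hθI, ?_⟩
    rw [integral_eq_lintegral_of_nonneg_ae hθnn hθm.aestronglyMeasurable, hL,
      ENNReal.toReal_ofReal (hφnn u ⟨hu.1.le, hu.2.le⟩)]
  -- subgradient inequality
  have hsub : ∀ u ∈ Ioo (0:ℝ) 1, ∀ s : ℝ,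
      φ u * (s - quantile P X u) ≤ g s - g (quantile P X u) := by
    intro u hu s
    obtain ⟨hθI, hθint⟩ := hθ u hu
    have key : ∀ᵐ α ∂μ, (1-α)⁻¹ * (Icc (0:ℝ) u).indicator (fun _ => (1:ℝ)) α
          * (s - quantile P X u)
        ≤ gphiIntegrand P X s α - gphiIntegrand P X (quantile P X u) α := by
      filter_upwards [hμae] with α hα
      unfold gphiIntegrand
      have hk : (0:ℝ) ≤ (1 - α)⁻¹ := inv_nonneg.2 (by linarith [hα.2])
      by_cases hmem : α ∈ Icc (0:ℝ) u
      · rw [indicator_of_mem hmem]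
        have hc : quantile P X α ≤ quantile P X u :=
          hmono ⟨hmem.1, lt_of_le_of_lt hmem.2 hu.2⟩ ⟨hu.1.le, hu.2⟩ hmem.2
        have h1 : max (quantile P X u - quantile P X α) 0
            = quantile P X u - quantile P X α := max_eq_left (by linarith)
        have h2 : s - quantile P X α ≤ max (s - quantile P X α) 0 := le_max_left _ _
        rw [h1]
        have := mul_le_mul_of_nonneg_left
          (by linarith : s - quantile P X u ≤ max (s - quantile P X α) 0
            - (quantile P X u - quantile P X α)) hk
        nlinarith [this]
      · rw [indicator_of_notMem hmem]
        have hu' : u < α := by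
          rcases not_and_or.1 hmem with h | h
          · exact absurd hα.1 h
          · exact not_le.1 h
        have hc : quantile P X u ≤ quantile P X α :=
          hmono ⟨hu.1.le, hu.2⟩ hα hu'.le
        have h1 : max (quantile P X u - quantile P X α) 0 = 0 := max_eq_right (by linarith)
        rw [h1, mul_zero, zero_mul]
        nlinarith [mul_nonneg hk (le_max_right (s - quantile P X α) 0)]
    calc φ u * (s - quantile P X u)
        = (∫ α, (1-α)⁻¹ * (Icc (0:ℝ) u).indicator (fun _ => (1:ℝ)) α ∂μ)
            * (s - quantile P X u) := by rw [hθint]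
      _ = ∫ α, (1-α)⁻¹ * (Icc (0:ℝ) u).indicator (fun _ => (1:ℝ)) α
            * (s - quantile P X u) ∂μ := (integral_mul_const _ _).symm
      _ ≤ ∫ α, (gphiIntegrand P X s α - gphiIntegrand P X (quantile P X u) α) ∂μ :=
          integral_mono_ae (hθI.mul_const _) ((hInt s).sub (hInt (quantile P X u))) key
      _ = g s - g (quantile P X u) := (hgsub s (quantile P X u)).symm
  -- conjugate value
  have hconj : ∀ u ∈ Ioo (0:ℝ) 1,
      conj g (φ u) = ((quantile P X u * φ u - g (quantile P X u) : ℝ) : EReal) := by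
    intro u hu
    apply le_antisymm
    · apply iSup_le
      intro s
      rw [EReal.coe_le_coe_iff]
      have := hsub u hu s
      nlinarith [this]
    · exact le_iSup (fun s => ((s * φ u - g s : ℝ) : EReal)) (quantile P X u)
  have hgm : Measurable g := hgmono.measurable
  have hbpos : ∀ u ∈ Ioo (0:ℝ) 1, 0 ≤ quantile P X u * φ u - g (quantile P X u) + g 0 := by
    intro u hu
    have := hsub u hu 0
    nlinarith [this]
  have hgq0 : ∀ u ∈ Ioo (0:ℝ) 1, 0 ≤ g (quantile P X u) - g 0 := by
    intro u hu
    have := hgmono (hq0 u)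
    linarith
  have hA : ∫⁻ ω, ENNReal.ofReal (g (X ω) - g 0) ∂P
      = ∫⁻ u in Ioo (0:ℝ) 1, ENNReal.ofReal (g (quantile P X u) - g 0) := by
    have hf : Measurable fun x => ENNReal.ofReal (g x - g 0) :=
      ENNReal.measurable_ofReal.comp (hgm.sub measurable_const)
    rw [← lintegral_map' hf.aemeasurable hXm.aemeasurable, ← map_quantile P X hXm hX,
      lintegral_map' hf.aemeasurable (quantile_aemeasurable_Ioo P X hX)]
  have hABkey : specRisk P φ X
      = (∫⁻ ω, ENNReal.ofReal (g (X ω) - g 0) ∂P)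
        + (∫⁻ u in Ioo (0:ℝ) 1, erealToENNReal (conj g (φ u) + ((g 0 : ℝ) : EReal))) := by
    have hBc : ∫⁻ u in Ioo (0:ℝ) 1, erealToENNReal (conj g (φ u) + ((g 0 : ℝ) : EReal))
        = ∫⁻ u in Ioo (0:ℝ) 1,
            ENNReal.ofReal (quantile P X u * φ u - g (quantile P X u) + g 0) := by
      apply lintegral_congr_ae
      filter_upwards [ae_restrict_mem measurableSet_Ioo] with u hu
      rw [hconj u hu, ← EReal.coe_add]
      unfold erealToENNReal
      rw [if_neg (EReal.coe_ne_top _), EReal.toReal_coe]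
    have hm1 : AEMeasurable (fun u : ℝ => ENNReal.ofReal (g (quantile P X u) - g 0))
        (volume.restrict (Ioo (0:ℝ) 1)) :=
      ((hgm.comp_aemeasurable (quantile_aemeasurable_Ioo P X hX)).sub
        aemeasurable_const).ennreal_ofReal
    rw [hA, hBc, ← lintegral_add_left' hm1]
    unfold specRisk
    apply lintegral_congr_ae
    filter_upwards [ae_restrict_mem measurableSet_Ioo] with u hu
    rw [← ENNReal.ofReal_add (hgq0 u hu) (hbpos u hu)]
    congr 1
    ring
  refine ⟨hInt, hgmono, hgconv, ?_⟩
  show ((specRisk P φ X : ℝ≥0∞) : EReal) = expFrom P g X (g 0) + intConj φ g (g 0)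
  unfold expFrom intConj
  rw [hABkey, ereal_assemble]
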